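/- arXiv:1407.2514 — 2 statements merged into one kernel-verified Lean document; each statement's English description precedes it below -/
import Mathlib

section
/- Let K > 0 be a real number and let u be a complex number with 0 < Re(u) < 1. Then the bilateral Laplace transform of the covered-call payoff exists and satisfies ∫_{-∞}^{∞} (max(e^x - K, 0) - e^x) · e^{-u x} dx = K^{1-u} / (u(u-1)). -/
open MeasureTheory Complex Filter Set

lemma cexp_integrableOn_Ioi (c : ℂ) (hc : c.re < 0) (a : ℝ) :
    IntegrableOn (fun x : ℝ => Complex.exp (c * x)) (Set.Ioi a) := by
  have h := exp_neg_integrableOn_Ioi a (neg_pos.mpr hc)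
  refine h.mono' ?_ ?_
  · exact (Complex.continuous_exp.comp (continuous_const.mul Complex.continuous_ofReal)).aestronglyMeasurable
  · filter_upwards with x
    simp [Complex.norm_exp, neg_mul]

lemma cexp_integrableOn_Iic (c : ℂ) (hc : 0 < c.re) (a : ℝ) :
    IntegrableOn (fun x : ℝ => Complex.exp (c * x)) (Set.Iic a) := by
  have h := cexp_integrableOn_Ioi (-c) (by simpa using hc) (-a)
  rw [← Measure.map_neg_eq_self (volume : Measure ℝ)]
  have m : MeasurableEmbedding fun x : ℝ => -x := (Homeomorph.neg ℝ).measurableEmbedding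
  rw [m.integrableOn_map_iff]
  simp_rw [Function.comp_def, neg_preimage, Set.neg_Iic]
  refine Iff.mpr integrableOn_Ici_iff_integrableOn_Ioi (h.congr_fun ?_ measurableSet_Ioi)
  intro x _
  simp [mul_neg, neg_mul]

lemma tendsto_cexp_atTop (c : ℂ) (hc : c.re < 0) :
    Tendsto (fun b : ℝ => Complex.exp (c * b)) atTop (nhds 0) := by
  rw [tendsto_zero_iff_norm_tendsto_zero]
  simp only [Complex.norm_exp, Complex.mul_re, Complex.ofReal_re,
    Complex.ofReal_im, mul_zero, sub_zero]
  have h1 : Tendsto (fun b : ℝ => (-c.re) * b) atTop atTop :=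
    Tendsto.const_mul_atTop (by linarith) tendsto_id
  have h2 := Real.tendsto_exp_neg_atTop_nhds_zero.comp h1
  refine h2.congr fun b => ?_
  show Real.exp (-(-c.re * b)) = Real.exp (c.re * b)
  ring_nf

lemma cexp_integral_Ioi (c : ℂ) (hc : c.re < 0) (a : ℝ) :
    ∫ x in Set.Ioi a, Complex.exp (c * x) = -Complex.exp (c * a) / c := by
  have hc0 : c ≠ 0 := fun h => by simp [h] at hc
  have h1 := intervalIntegral_tendsto_integral_Ioi a (cexp_integrableOn_Ioi c hc a) tendsto_id
  have h2 : Tendsto (fun b : ℝ => ∫ x in a..b, Complex.exp (c * x)) atTop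
      (nhds (-Complex.exp (c * a) / c)) := by
    simp only [integral_exp_mul_complex hc0]
    have := ((tendsto_cexp_atTop c hc).sub_const (Complex.exp (c * a))).div_const c
    simpa using this
  exact tendsto_nhds_unique h1 h2

lemma cexp_integral_Iic (c : ℂ) (hc : 0 < c.re) (a : ℝ) :
    ∫ x in Set.Iic a, Complex.exp (c * x) = Complex.exp (c * a) / c := by
  have hc0 : c ≠ 0 := fun h => by simp [h] at hc
  have h1 := intervalIntegral_tendsto_integral_Iic a (cexp_integrableOn_Iic c hc a) tendsto_id
  have h2 : Tendsto (fun b : ℝ => ∫ x in b..a, Complex.exp (c * x)) atBot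
      (nhds (Complex.exp (c * a) / c)) := by
    simp only [integral_exp_mul_complex hc0]
    have hneg : Tendsto (fun b : ℝ => Complex.exp (c * b)) atBot (nhds 0) := by
      have h3 := (tendsto_cexp_atTop (-c) (by simpa using hc)).comp tendsto_neg_atBot_atTop
      refine h3.congr fun b => ?_
      show Complex.exp (-c * ↑(-b)) = Complex.exp (c * b)
      push_cast; ring_nf
    have := ((tendsto_const_nhds.sub hneg).div_const c
      : Tendsto (fun b : ℝ => (Complex.exp (c * a) - Complex.exp (c * b)) / c) atBot _)
    simpa using this
  exact tendsto_nhds_unique h1 h2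

/-- Bilateral Laplace transform of the covered-call payoff: for `K > 0` and
`0 < Re u < 1`, `∫ ((e^x - K)_+ - e^x) e^{-ux} dx = K^(1-u) / (u (u-1))`. -/
theorem covered_call_payoff_laplace_transform (K : ℝ) (hK : 0 < K) (u : ℂ)
    (hu0 : 0 < u.re) (hu1 : u.re < 1) :
    Integrable
      (fun x : ℝ => ((max (Real.exp x - K) 0 - Real.exp x : ℝ) : ℂ) * Complex.exp (-u * x)) ∧
    ∫ x : ℝ, ((max (Real.exp x - K) 0 - Real.exp x : ℝ) : ℂ) * Complex.exp (-u * x)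
      = (K : ℂ) ^ ((1 : ℂ) - u) / (u * (u - 1)) := by
  set L := Real.log K with hLdef
  have hexpL : Real.exp L = K := Real.exp_log hK
  have hu : u ≠ 0 := fun h => by simp [h] at hu0
  have hu1' : u - 1 ≠ 0 := fun h => by
    have : u.re = 1 := by
      have := congrArg Complex.re h; simpa [sub_eq_zero] using sub_eq_zero.mp h ▸ rfl
    linarith [this ▸ hu1]
  have h1u : (0:ℝ) < ((1:ℂ) - u).re := by simp [Complex.sub_re]; linarith
  have hnu : (-u).re < 0 := by simp; linarith
  set f := fun x : ℝ => ((max (Real.exp x - K) 0 - Real.exp x : ℝ) : ℂ) * Complex.exp (-u * x)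
    with hf
  have hIic : Set.EqOn (fun x : ℝ => -Complex.exp (((1:ℂ) - u) * x)) f (Set.Iic L) := by
    intro x hx
    have hxK : Real.exp x ≤ K := by
      rw [← hexpL]; exact Real.exp_le_exp.mpr hx
    have hmax : max (Real.exp x - K) 0 = 0 := max_eq_right (by linarith)
    simp only [hf, hmax, zero_sub, Complex.ofReal_neg, Complex.ofReal_exp]
    rw [show ((1:ℂ) - u) * (x:ℂ) = (x:ℂ) + (-u * x) by ring, Complex.exp_add]
    ring
  have hIoi : Set.EqOn (fun x : ℝ => -(K:ℂ) * Complex.exp (-u * x)) f (Set.Ioi L) := by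
    intro x hx
    have hxK : K ≤ Real.exp x := by
      rw [← hexpL]; exact Real.exp_le_exp.mpr (le_of_lt hx)
    have hmax : max (Real.exp x - K) 0 = Real.exp x - K := max_eq_left (by linarith)
    simp only [hf, hmax]
    push_cast
    ring
  have hint1 : IntegrableOn f (Set.Iic L) :=
    IntegrableOn.congr_fun ((cexp_integrableOn_Iic ((1:ℂ) - u) h1u L).neg) hIic measurableSet_Iic
  have hint2 : IntegrableOn f (Set.Ioi L) :=
    IntegrableOn.congr_fun ((cexp_integrableOn_Ioi (-u) hnu L).const_mul (-(K:ℂ))) hIoi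
      measurableSet_Ioi
  have hInt : Integrable f := by
    rw [← integrableOn_univ, ← Set.Iic_union_Ioi (a := L)]
    exact hint1.union hint2
  refine ⟨hInt, ?_⟩
  rw [← intervalIntegral.integral_Iic_add_Ioi hint1 hint2]
  have e1 : ∫ x in Set.Iic L, f x = -(Complex.exp (((1:ℂ) - u) * L) / ((1:ℂ) - u)) := by
    rw [← setIntegral_congr_fun measurableSet_Iic hIic, integral_neg,
      cexp_integral_Iic _ h1u]
  have e2 : ∫ x in Set.Ioi L, f x = -(K:ℂ) * (-Complex.exp (-u * L) / (-u)) := by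
    rw [← setIntegral_congr_fun measurableSet_Ioi hIoi, integral_const_mul,
      cexp_integral_Ioi _ hnu]
  rw [e1, e2]
  have hKpow : (K : ℂ) ^ ((1 : ℂ) - u) = Complex.exp (((1:ℂ) - u) * L) := by
    rw [Complex.cpow_def_of_ne_zero (by exact_mod_cast hK.ne'), ← Complex.ofReal_log hK.le,
      mul_comm]
  have hsplit : Complex.exp (((1:ℂ) - u) * L) = (K:ℂ) * Complex.exp (-u * L) := by
    rw [show ((1:ℂ) - u) * L = L + (-u * L) by ring, Complex.exp_add, ← Complex.ofReal_exp,
      hexpL]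
  rw [hKpow, hsplit]
  have h1u' : (1:ℂ) - u ≠ 0 := fun h => by
    apply hu1'; rw [← neg_eq_zero]; rw [← h]; ring
  field_simp
  ring
end

section
/- Let K > 0 and a > 1 be real numbers. Then for every real x, the function t ↦ K^{1-(a+it)} · e^{(a+it)x} / ((a+it)(a+it-1)) is Lebesgue integrable over ℝ and (1/(2π)) · ∫_{-∞}^{∞} K^{1-(a+it)} · e^{(a+it)x} / ((a+it)(a+it-1)) dt = max(e^x - K, 0), where i is the imaginary unit and the left-hand side is a complex integral whose value is the real number on the right. -/
open MeasureTheory Complex Set Filter Real Topology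

lemma integrableOn_cexp_Ioi (c : ℂ) (hc : c.re < 0) (L : ℝ) :
    IntegrableOn (fun u : ℝ => Complex.exp (c * u)) (Ioi L) := by
  refine Integrable.mono' (exp_neg_integrableOn_Ioi L (b := -c.re) (by linarith)) ?_ ?_
  · exact (Complex.continuous_exp.comp (by continuity)).aestronglyMeasurable.restrict
  · filter_upwards with u
    rw [Complex.norm_exp]
    simp [Complex.mul_re]

lemma integral_cexp_Ioi (c : ℂ) (hc : c.re < 0) (L : ℝ) :
    ∫ u in Ioi L, Complex.exp (c * u) = -Complex.exp (c * L) / c := by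
  have hc0 : c ≠ 0 := fun h => by simp [h] at hc
  have h1 := intervalIntegral_tendsto_integral_Ioi L (integrableOn_cexp_Ioi c hc L) tendsto_id
  have hexp : Tendsto (fun b : ℝ => Complex.exp (c * b)) atTop (𝓝 0) := by
    rw [tendsto_zero_iff_norm_tendsto_zero]
    have h : (fun b : ℝ => ‖Complex.exp (c * b)‖) = fun b => Real.exp (c.re * b) := by
      ext b; rw [Complex.norm_exp]; simp [Complex.mul_re]
    rw [h]
    exact Real.tendsto_exp_atBot.comp ((tendsto_const_mul_atBot_of_neg hc).mpr tendsto_id)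
  have h2 : Tendsto (fun b : ℝ => ∫ u in L..b, Complex.exp (c * u)) atTop
      (𝓝 (-Complex.exp (c * L) / c)) := by
    have heq : (fun b : ℝ => ∫ u in L..b, Complex.exp (c * u))
        = fun b : ℝ => (Complex.exp (c * b) - Complex.exp (c * L)) / c := by
      ext b; exact integral_exp_mul_complex hc0
    rw [heq]
    have := (hexp.sub (tendsto_const_nhds (x := Complex.exp (c * L)))).div_const c
    simpa using this
  exact tendsto_nhds_unique h1 h2

noncomputable def gfun (K a : ℝ) : ℝ → ℂ :=
  fun u => ((max (Real.exp u - K) 0 : ℝ) : ℂ) * Complex.exp (-(a : ℂ) * u)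

lemma gfun_continuous (K a : ℝ) : Continuous (gfun K a) := by
  apply Continuous.mul
  · exact Complex.continuous_ofReal.comp ((Real.continuous_exp.sub continuous_const).max continuous_const)
  · exact Complex.continuous_exp.comp (by continuity)

lemma gfun_eq_zero (K a : ℝ) (hK : 0 < K) {u : ℝ} (hu : u ≤ Real.log K) : gfun K a u = 0 := by
  have : Real.exp u ≤ K := by
    calc Real.exp u ≤ Real.exp (Real.log K) := Real.exp_le_exp.mpr hu
    _ = K := Real.exp_log hK
  simp [gfun, max_eq_right (by linarith : Real.exp u - K ≤ 0)]

lemma gfun_integrable (K a : ℝ) (hK : 0 < K) (ha : 1 < a) : Integrable (gfun K a) := by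
  set L := Real.log K
  refine Integrable.mono' (g := Set.indicator (Ioi L) (fun u => Real.exp (-(a-1) * u))) ?_
    (gfun_continuous K a).aestronglyMeasurable ?_
  · exact (exp_neg_integrableOn_Ioi L (by linarith)).integrable_indicator measurableSet_Ioi
  · filter_upwards with u
    by_cases hu : u ∈ Ioi L
    · rw [Set.indicator_of_mem hu]
      have h1 : ‖gfun K a u‖ = |max (Real.exp u - K) 0| * Real.exp (-a * u) := by
        rw [gfun, norm_mul, Complex.norm_real, Complex.norm_exp]
        simp [Complex.mul_re]
      rw [h1, _root_.abs_of_nonneg (le_max_right (Real.exp u - K) 0)]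
      have h2 : max (Real.exp u - K) 0 ≤ Real.exp u :=
        max_le (by linarith [hK]) (Real.exp_pos u).le
      calc max (Real.exp u - K) 0 * Real.exp (-a * u) ≤ Real.exp u * Real.exp (-a * u) :=
            mul_le_mul_of_nonneg_right h2 (Real.exp_pos _).le
        _ = Real.exp (-(a-1) * u) := by rw [← Real.exp_add]; ring_nf
    · rw [Set.indicator_of_notMem hu, gfun_eq_zero K a hK (le_of_not_gt hu)]
      simp

open FourierTransform InnerProductSpace in
lemma fourier_gfun (K a : ℝ) (hK : 0 < K) (ha : 1 < a) (ξ : ℝ) :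
    𝓕 (gfun K a) ξ =
      Complex.exp (((1 : ℂ) - ((a : ℂ) + (2 * π * ξ) * Complex.I)) * (Real.log K : ℂ)) /
        (((a : ℂ) + (2 * π * ξ) * Complex.I) * (((a : ℂ) + (2 * π * ξ) * Complex.I) - 1)) := by
  set s : ℂ := (a : ℂ) + (2 * π * ξ) * Complex.I with hs_def
  set L := Real.log K with hL_def
  have hsre : s.re = a := by simp [hs_def]
  have hs1re : (s - 1).re = a - 1 := by simp [hs_def]
  have hs0 : s ≠ 0 := fun h => by rw [h] at hsre; simp at hsre; linarith
  have hs1 : s - 1 ≠ 0 := fun h => by rw [h] at hs1re; simp at hs1re; linarith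
  have h1s : (1 : ℂ) - s ≠ 0 := by
    intro h
    apply hs1
    rw [← neg_eq_zero]; rw [← h]; ring
  have hKc : (K : ℂ) = Complex.exp (L : ℂ) := by
    rw [← Complex.ofReal_exp, Real.exp_log hK]
  rw [Real.fourier_eq']
  have hsupp : ∀ v : ℝ, v ∉ Ioi L →
      Complex.exp ((↑(-2 * π * ⟪v, ξ⟫_ℝ) * Complex.I)) • gfun K a v = 0 := by
    intro v hv
    rw [gfun_eq_zero K a hK (le_of_not_gt hv), smul_zero]
  rw [← setIntegral_eq_integral_of_forall_compl_eq_zero hsupp]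
  have hcong : EqOn (fun v : ℝ => Complex.exp ((↑(-2 * π * ⟪v, ξ⟫_ℝ) * Complex.I)) • gfun K a v)
      (fun u : ℝ => Complex.exp ((1 - s) * u) - (K : ℂ) * Complex.exp (-s * u)) (Ioi L) := by
    intro u hu
    have hmax : max (Real.exp u - K) 0 = Real.exp u - K := by
      apply max_eq_left
      have : K < Real.exp u := by
        rw [← Real.exp_log hK]
        exact Real.exp_lt_exp.mpr hu
      linarith
    simp only [gfun, hmax, smul_eq_mul]
    have h1 : ((1 : ℂ) - s) * u = (↑(-2 * π * ⟪u, ξ⟫_ℝ) * Complex.I) + ((u : ℂ) + -(a : ℂ) * u) := by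
      simp only [hs_def, RCLike.inner_apply, conj_trivial]
      push_cast
      ring
    have h2 : (-s : ℂ) * u = (↑(-2 * π * ⟪u, ξ⟫_ℝ) * Complex.I) + (-(a : ℂ) * u) := by
      simp only [hs_def, RCLike.inner_apply, conj_trivial]
      push_cast
      ring
    rw [h1, h2, Complex.exp_add, Complex.exp_add, Complex.exp_add]
    push_cast [Complex.ofReal_exp]
    ring
  rw [setIntegral_congr_fun measurableSet_Ioi hcong]
  have hint1 : IntegrableOn (fun u : ℝ => Complex.exp ((1 - s) * u)) (Ioi L) :=
    integrableOn_cexp_Ioi (1 - s) (by simp [hsre]; linarith [hsre]) L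
  have hint2 : IntegrableOn (fun u : ℝ => (K : ℂ) * Complex.exp (-s * u)) (Ioi L) :=
    (integrableOn_cexp_Ioi (-s) (by simp [hsre]; linarith [hsre]) L).const_mul _
  rw [integral_sub hint1 hint2, MeasureTheory.integral_const_mul,
    integral_cexp_Ioi (1 - s) (by simp; linarith [hsre]) L,
    integral_cexp_Ioi (-s) (by simp; linarith [hsre]) L]
  have hKexp : (K : ℂ) * Complex.exp (-s * L) = Complex.exp ((1 - s) * L) := by
    rw [hKc, ← Complex.exp_add]
    congr 1
    ring
  rw [neg_div_neg_eq, ← mul_div_assoc, hKexp]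
  field_simp
  ring

open FourierTransform in
lemma fourier_gfun_integrable (K a : ℝ) (hK : 0 < K) (ha : 1 < a) :
    Integrable (𝓕 (gfun K a)) := by
  have heq : 𝓕 (gfun K a) = fun ξ : ℝ =>
      Complex.exp (((1 : ℂ) - ((a : ℂ) + (2 * π * ξ) * Complex.I)) * (Real.log K : ℂ)) /
        (((a : ℂ) + (2 * π * ξ) * Complex.I) * (((a : ℂ) + (2 * π * ξ) * Complex.I) - 1)) :=
    funext (fourier_gfun K a hK ha)
  rw [heq]
  have ha0 : 0 < a * (a - 1) := mul_pos (by linarith) (by linarith)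
  set E := Real.exp ((1 - a) * Real.log K) with hE_def
  have hE : 0 < E := Real.exp_pos _
  set D := 1 / (a * (a - 1)) + 1 with hD_def
  have hD : 0 < D := by positivity
  refine Integrable.mono' (g := fun ξ => E * D * (1 + ξ ^ 2)⁻¹)
    (integrable_inv_one_add_sq.const_mul (E * D)) ?_ ?_
  · apply Continuous.aestronglyMeasurable
    apply Continuous.div
    · fun_prop
    · fun_prop
    · intro ξ
      apply mul_ne_zero
      · intro h
        have := congrArg Complex.re h
        simp at this
        linarith
      · intro h
        have := congrArg Complex.re h
        simp at this
        linarith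
  · filter_upwards with ξ
    set s : ℂ := (a : ℂ) + (2 * π * ξ) * Complex.I with hs_def
    have hsre : s.re = a := by simp [hs_def]
    have hsim : s.im = 2 * π * ξ := by simp [hs_def]
    have hs1re : (s - 1).re = a - 1 := by simp [hs_def]
    have hs1im : (s - 1).im = 2 * π * ξ := by simp [hs_def]
    set P := ‖s‖ * ‖s - 1‖ with hP_def
    have hξ1 : |ξ| ≤ ‖s‖ := by
      calc |ξ| ≤ |2 * π * ξ| := by
            rw [abs_mul, _root_.abs_of_pos (by positivity : (0:ℝ) < 2 * π)]
            nlinarith [abs_nonneg ξ, Real.pi_gt_three]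
        _ = |s.im| := by rw [hsim]
        _ ≤ ‖s‖ := Complex.abs_im_le_norm s
    have hξ2 : |ξ| ≤ ‖s - 1‖ := by
      calc |ξ| ≤ |2 * π * ξ| := by
            rw [abs_mul, _root_.abs_of_pos (by positivity : (0:ℝ) < 2 * π)]
            nlinarith [abs_nonneg ξ, Real.pi_gt_three]
        _ = |(s - 1).im| := by rw [hs1im]
        _ ≤ ‖s - 1‖ := Complex.abs_im_le_norm _
    have ha1 : a ≤ ‖s‖ := by
      calc a = |s.re| := by rw [hsre]; exact (abs_of_pos (by linarith)).symm
        _ ≤ ‖s‖ := Complex.abs_re_le_norm s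
    have ha2 : a - 1 ≤ ‖s - 1‖ := by
      calc a - 1 = |(s - 1).re| := by rw [hs1re]; exact (abs_of_pos (by linarith)).symm
        _ ≤ ‖s - 1‖ := Complex.abs_re_le_norm _
    have hP1 : a * (a - 1) ≤ P := mul_le_mul ha1 ha2 (by linarith) (norm_nonneg s)
    have hP2 : ξ ^ 2 ≤ P := by
      calc ξ ^ 2 = |ξ| * |ξ| := by rw [← abs_mul, ← sq, _root_.abs_of_nonneg (sq_nonneg ξ)]
        _ ≤ P := mul_le_mul hξ1 hξ2 (abs_nonneg ξ) (norm_nonneg s)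
    have hP0 : 0 < P := lt_of_lt_of_le ha0 hP1
    have hnorm : ‖Complex.exp (((1 : ℂ) - s) * (Real.log K : ℂ)) / (s * (s - 1))‖ = E / P := by
      rw [norm_div, Complex.norm_exp, norm_mul]
      congr 1
      rw [hE_def]
      congr 1
      simp [hs_def, Complex.mul_re]
    rw [hnorm]
    have hkey : 1 + ξ ^ 2 ≤ D * P := by
      have h1 : 1 ≤ 1 / (a * (a - 1)) * P := by
        rw [one_div, inv_mul_eq_div, le_div_iff₀ ha0]
        linarith
      calc 1 + ξ ^ 2 ≤ 1 / (a * (a - 1)) * P + P := add_le_add h1 hP2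
        _ = D * P := by rw [hD_def]; ring
    have h2 : 0 < 1 + ξ ^ 2 := by positivity
    rw [← div_eq_mul_inv, div_le_div_iff₀ hP0 h2]
    nlinarith [mul_le_mul_of_nonneg_left hkey hE.le]

open FourierTransform InnerProductSpace in
/-- Bromwich inversion for the call payoff: for `K > 0`, `a > 1` and every real `x`,
`(1/(2π)) ∫ K^{1-(a+it)} e^{(a+it)x} / ((a+it)(a+it-1)) dt = (e^x - K)_+`. -/
theorem call_payoff_laplace_inversion (K a : ℝ) (hK : 0 < K) (ha : 1 < a) (x : ℝ) :
    Integrable (fun t : ℝ =>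
      (K : ℂ) ^ ((1 : ℂ) - ((a : ℂ) + t * Complex.I)) *
        Complex.exp (((a : ℂ) + t * Complex.I) * x) /
        (((a : ℂ) + t * Complex.I) * (((a : ℂ) + t * Complex.I) - 1))) ∧
    (1 / (2 * Real.pi) : ℂ) * ∫ t : ℝ,
        (K : ℂ) ^ ((1 : ℂ) - ((a : ℂ) + t * Complex.I)) *
          Complex.exp (((a : ℂ) + t * Complex.I) * x) /
          (((a : ℂ) + t * Complex.I) * (((a : ℂ) + t * Complex.I) - 1))
      = ((max (Real.exp x - K) 0 : ℝ) : ℂ) := by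
  have hπ : (0 : ℝ) < π := Real.pi_pos
  have h2π : (2 * π : ℝ) ≠ 0 := by positivity
  set L := Real.log K with hL_def
  have hg_int := gfun_integrable K a hK ha
  have hFT_int := fourier_gfun_integrable K a hK ha
  have hinv : 𝓕⁻ (𝓕 (gfun K a)) x = gfun K a x :=
    hg_int.fourierInv_fourier_eq hFT_int (gfun_continuous K a).continuousAt
  rw [Real.fourierInv_eq'] at hinv
  simp only [RCLike.inner_apply, conj_trivial] at hinv
  set H : ℝ → ℂ := fun ξ =>
    (Complex.exp ((a : ℂ) * x) * Complex.exp ((↑(2 * π * (ξ * x)) : ℂ) * Complex.I)) *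
      𝓕 (gfun K a) ξ with hH_def
  have hH_int : Integrable H := by
    refine Integrable.bdd_mul (c := Real.exp (a * x)) hFT_int ?_ (Filter.Eventually.of_forall fun ξ => ?_)
    · apply Continuous.aestronglyMeasurable
      fun_prop
    · rw [norm_mul, Complex.norm_exp, Complex.norm_exp]
      simp [Complex.mul_re]
  have hFH : (fun t : ℝ =>
      (K : ℂ) ^ ((1 : ℂ) - ((a : ℂ) + t * Complex.I)) *
        Complex.exp (((a : ℂ) + t * Complex.I) * x) /
        (((a : ℂ) + t * Complex.I) * (((a : ℂ) + t * Complex.I) - 1)))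
      = fun t : ℝ => H (t / (2 * π)) := by
    funext t
    simp only [hH_def]
    rw [fourier_gfun K a hK ha (t / (2 * π))]
    have hπC : (π : ℂ) ≠ 0 := by exact_mod_cast hπ.ne'
    have hsC : (a : ℂ) + 2 * (π : ℂ) * ((t / (2 * π) : ℝ) : ℂ) * Complex.I
        = (a : ℂ) + (t : ℂ) * Complex.I := by
      push_cast
      field_simp
    rw [hsC]
    have hcpow : (K : ℂ) ^ ((1 : ℂ) - ((a : ℂ) + t * Complex.I))
        = Complex.exp (((1 : ℂ) - ((a : ℂ) + t * Complex.I)) * (L : ℂ)) := by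
      rw [Complex.cpow_def_of_ne_zero (by exact_mod_cast hK.ne' : (K : ℂ) ≠ 0),
        ← Complex.ofReal_log hK.le, mul_comm]
    rw [hcpow]
    have hexp : Complex.exp (((a : ℂ) + t * Complex.I) * x)
        = Complex.exp ((a : ℂ) * x) * Complex.exp ((↑(2 * π * (t / (2 * π) * x)) : ℂ) * Complex.I) := by
      rw [← Complex.exp_add]
      congr 1
      have : 2 * π * (t / (2 * π) * x) = t * x := by field_simp
      rw [this]
      push_cast
      ring
    rw [hexp]
    ring
  constructor
  · rw [hFH]
    exact hH_int.comp_div h2π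
  · rw [hFH, MeasureTheory.Measure.integral_comp_div H (2 * π)]
    simp only [smul_eq_mul] at hinv
    have hHint_eq : ∫ y, H y = Complex.exp ((a : ℂ) * x) * gfun K a x := by
      simp only [hH_def]
      have : (fun ξ : ℝ => Complex.exp ((a : ℂ) * x) *
              Complex.exp ((↑(2 * π * (ξ * x)) : ℂ) * Complex.I) * 𝓕 (gfun K a) ξ)
          = fun ξ : ℝ => Complex.exp ((a : ℂ) * x) *
              (Complex.exp ((↑(2 * π * (ξ * x)) : ℂ) * Complex.I) * 𝓕 (gfun K a) ξ) := by
        funext ξ; ring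
      rw [this, MeasureTheory.integral_const_mul]
      simp_rw [mul_comm _ x]
      rw [hinv]
    have hgx : Complex.exp ((a : ℂ) * x) * gfun K a x
        = ((max (Real.exp x - K) 0 : ℝ) : ℂ) := by
      simp only [gfun]
      rw [mul_comm ((max (Real.exp x - K) 0 : ℝ) : ℂ) _, ← mul_assoc, ← Complex.exp_add]
      have : (a : ℂ) * x + -(a : ℂ) * x = 0 := by ring
      rw [this, Complex.exp_zero, one_mul]
    rw [hHint_eq, hgx, _root_.abs_of_pos (by positivity : (0 : ℝ) < 2 * π), Complex.real_smul]
    rw [Complex.ofReal_mul]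
    have hπC : (π : ℂ) ≠ 0 := by exact_mod_cast hπ.ne'
    field_simp
    norm_num
end
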